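/- Let c be a nonzero complex number and δ > 0. Suppose f is holomorphic on ℂ \ {0}, f(u) = O(1) as u → 0 along the positive real axis, and f(u) = O(u^{-δ}) as u → ∞ along the positive real axis. Define F₁(z) = ∫_0^∞ f(u)/(u - cz) du for z with Im(cz) < 0. Then for z with cz in the first quadrant (obtained by analytic continuation of F₁ across the positive real axis), F₁(z) = -2πi f(cz) + ∫_0^∞ f(u)/(u - cz) du. -/

import Mathlib

open Complex Set MeasureTheory Filter Metric Topology

lemma aux_cont_kernel {f : ℂ → ℂ} (hf : ContinuousOn f {z : ℂ | z ≠ 0}) (w : ℂ)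
    {s : Set ℝ} (hsub : s ⊆ Ioi 0) (hw : ∀ u ∈ s, (u:ℂ) ≠ w) :
    ContinuousOn (fun u : ℝ => f u / (u - w)) s := by
  apply ContinuousOn.div
  · exact hf.comp Complex.continuous_ofReal.continuousOn (fun u hu => by
      simp only [mem_setOf_eq, ne_eq, Complex.ofReal_eq_zero]
      exact ne_of_gt (hsub hu))
  · exact Complex.continuous_ofReal.continuousOn.sub continuousOn_const
  · intro u hu
    exact sub_ne_zero.mpr (hw u hu)

lemma aux_integrableOn_kernel {f : ℂ → ℂ} (hf : ContinuousOn f {z : ℂ | z ≠ 0})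
    {C δ : ℝ} (hδ : 0 < δ) (hC : ∀ u : ℝ, 0 < u → ‖f u‖ ≤ C)
    (hCδ : ∀ u : ℝ, 1 ≤ u → ‖f u‖ ≤ C * u ^ (-δ))
    (w : ℂ) {ε : ℝ} (hε : 0 < ε) {s : Set ℝ} (hs : MeasurableSet s) (hsub : s ⊆ Ioi 0)
    (hdist : ∀ u ∈ s, ε ≤ ‖(u:ℂ) - w‖) :
    IntegrableOn (fun u : ℝ => f u / (u - w)) s := by
  have hC0 : 0 ≤ C := le_trans (norm_nonneg _) (hC 1 one_pos)
  set T : ℝ := max 1 (2 * ‖w‖) with hT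
  have hT1 : (1:ℝ) ≤ T := le_max_left _ _
  have hT0 : (0:ℝ) < T := lt_of_lt_of_le one_pos hT1
  have hne : ∀ u ∈ s, (u:ℂ) ≠ w := by
    intro u hu h
    have := hdist u hu
    rw [h, sub_self, norm_zero] at this
    linarith
  have hcont : ContinuousOn (fun u : ℝ => f u / (u - w)) s :=
    aux_cont_kernel hf w hsub hne
  have hsplit : s = (s ∩ Iic T) ∪ (s ∩ Ioi T) := by
    rw [← inter_union_distrib_left, Iic_union_Ioi, inter_univ]
  rw [hsplit]
  apply IntegrableOn.union
  · -- bounded piece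
    refine Integrable.mono' (g := fun _ : ℝ => C / ε) ?_ ?_ ?_
    · refine integrableOn_const (ne_of_lt ?_)
      refine lt_of_le_of_lt (measure_mono ?_) (measure_Ioc_lt_top (a := 0) (b := T))
      rintro u ⟨hu1, hu2⟩
      exact ⟨hsub hu1, hu2⟩
    · exact (hcont.mono inter_subset_left).aestronglyMeasurable (hs.inter measurableSet_Iic)
    · filter_upwards [ae_restrict_mem (hs.inter measurableSet_Iic)] with u hu
      rw [norm_div]
      exact div_le_div₀ hC0 (hC u (hsub hu.1)) hε (hdist u hu.1)
  · -- tail piece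
    refine Integrable.mono' (g := fun u : ℝ => 2 * C * u ^ (-δ - 1)) ?_ ?_ ?_
    · have hint : IntegrableOn (fun u : ℝ => 2 * C * u ^ (-δ - 1)) (Ioi T) :=
        (integrableOn_Ioi_rpow_of_lt (show -δ - 1 < -1 by linarith) hT0).const_mul _
      exact hint.mono_set inter_subset_right
    · exact (hcont.mono inter_subset_left).aestronglyMeasurable (hs.inter measurableSet_Ioi)
    · filter_upwards [ae_restrict_mem (hs.inter measurableSet_Ioi)] with u hu
      obtain ⟨hus, huT⟩ := hu
      have hu1 : (1:ℝ) ≤ u := le_of_lt (lt_of_le_of_lt hT1 huT)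
      have hu0 : (0:ℝ) < u := by linarith
      have hw2 : 2 * ‖w‖ ≤ u := le_of_lt (lt_of_le_of_lt (le_max_right _ _) huT)
      have hlow : u / 2 ≤ ‖(u:ℂ) - w‖ := by
        have h1 : ‖(u:ℂ)‖ - ‖w‖ ≤ ‖(u:ℂ) - w‖ := norm_sub_norm_le _ _
        have h2 : ‖(u:ℂ)‖ = u := by
          rw [Complex.norm_real, Real.norm_eq_abs, abs_of_pos hu0]
        linarith
      rw [norm_div]
      have h3 : ‖f ↑u‖ / ‖(u:ℂ) - w‖ ≤ C * u ^ (-δ) / (u / 2) :=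
        div_le_div₀ (by positivity) (hCδ u hu1) (by positivity) hlow
      refine h3.trans (le_of_eq ?_)
      rw [show -δ - 1 = -δ + (-1) by ring, Real.rpow_add hu0, Real.rpow_neg_one]
      field_simp



lemma aux_diff_R {f : ℂ → ℂ} (hfd : DifferentiableOn ℂ f {z : ℂ | z ≠ 0})
    {C δ : ℝ} (hδ : 0 < δ) (hC : ∀ u : ℝ, 0 < u → ‖f u‖ ≤ C)
    (hCδ : ∀ u : ℝ, 1 ≤ u → ‖f u‖ ≤ C * u ^ (-δ))
    {m r : ℝ} (hr : 0 < r) (hrm : r < m)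
    {s : Set ℝ} (hs : MeasurableSet s) (hsub : s ⊆ Ioi 0)
    (hfar : ∀ u ∈ s, r ≤ ‖(u:ℂ) - m‖) :
    DifferentiableOn ℂ (fun w => ∫ u in s, f u / (u - w)) (ball (m:ℂ) r) := by
  have hC0 : 0 ≤ C := le_trans (norm_nonneg _) (hC 1 one_pos)
  have hf : ContinuousOn f {z : ℂ | z ≠ 0} := hfd.continuousOn
  intro w₁ hw₁
  set d : ℝ := dist w₁ (m:ℂ) with hdd
  have hd : d < r := mem_ball.mp hw₁
  set ε : ℝ := (r - d) / 2 with hε'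
  have hε : 0 < ε := by
    have : 0 ≤ d := dist_nonneg
    simp only [hε']
    linarith
  have key : ∀ w ∈ ball w₁ ε, ∀ u ∈ s, ε ≤ ‖(u:ℂ) - w‖ := by
    intro w hw u hu
    have h1 : ‖(u:ℂ) - w‖ ≥ ‖(u:ℂ) - m‖ - ‖w - m‖ := by
      have : (u:ℂ) - w = ((u:ℂ) - m) - (w - m) := by ring
      rw [this]
      exact norm_sub_norm_le _ _
    have h2 : ‖w - m‖ ≤ ‖w - w₁‖ + ‖w₁ - m‖ := by
      have : w - m = (w - w₁) + (w₁ - m) := by ring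
      rw [this]; exact norm_add_le _ _
    have h3 : ‖w - w₁‖ < ε := mem_ball_iff_norm.mp hw
    have h4 : ‖w₁ - m‖ = d := by rw [hdd, dist_eq_norm]
    have h5 := hfar u hu
    simp only [hε'] at *
    linarith
  have keyne : ∀ w ∈ ball w₁ ε, ∀ u ∈ s, ((u:ℂ) - w) ≠ 0 := by
    intro w hw u hu h
    have := key w hw u hu
    rw [h, norm_zero] at this
    linarith
  have key2 : ∀ w ∈ ball w₁ ε, ‖w‖ < m + r := by
    intro w hw
    have h2 : ‖w - m‖ ≤ ‖w - w₁‖ + ‖w₁ - m‖ := by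
      have : w - m = (w - w₁) + (w₁ - m) := by ring
      rw [this]; exact norm_add_le _ _
    have h3 : ‖w - w₁‖ < ε := mem_ball_iff_norm.mp hw
    have h4 : ‖w₁ - m‖ = d := by rw [hdd, dist_eq_norm]
    have h5 : ‖w‖ ≤ ‖w - m‖ + ‖(m:ℂ)‖ := by
      have : w = (w - m) + m := by ring
      nth_rewrite 1 [this]; exact norm_add_le _ _
    have h6 : ‖(m:ℂ)‖ = m := by
      rw [Complex.norm_real, Real.norm_eq_abs, abs_of_pos (lt_trans hr hrm)]
    simp only [hε'] at *
    linarith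
  set T : ℝ := max 1 (2 * (m + r)) with hT
  have hT1 : (1:ℝ) ≤ T := le_max_left _ _
  have hT0 : (0:ℝ) < T := lt_of_lt_of_le one_pos hT1
  set bound : ℝ → ℝ := fun u => if u ≤ T then C / ε ^ 2 else 2 * C / ε * u ^ (-δ - 1)
    with hbound
  have main := hasDerivAt_integral_of_dominated_loc_of_deriv_le (μ := volume.restrict s)
    (F := fun (w : ℂ) (u : ℝ) => f u / (u - w))
    (F' := fun (w : ℂ) (u : ℝ) => f u / ((u:ℂ) - w) ^ 2)
    (x₀ := w₁) (bound := bound) (ball_mem_nhds w₁ hε) ?_ ?_ ?_ ?_ ?_ ?_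
  · exact main.2.differentiableAt.differentiableWithinAt
  · -- measurability of F w
    filter_upwards [ball_mem_nhds w₁ hε] with w hw
    exact ((aux_cont_kernel hf w hsub (fun u hu =>
      sub_ne_zero.mp (keyne w hw u hu))).aestronglyMeasurable hs)
  · -- integrability at w₁
    exact aux_integrableOn_kernel hf hδ hC hCδ w₁ hε hs hsub
      (key w₁ (mem_ball_self hε) )
  · -- measurability of F' w₁
    have hcont : ContinuousOn (fun u : ℝ => f u / ((u:ℂ) - w₁) ^ 2) s := by
      apply ContinuousOn.div
      · exact hf.comp Complex.continuous_ofReal.continuousOn (fun u hu => by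
          simp only [mem_setOf_eq, ne_eq, Complex.ofReal_eq_zero]
          exact ne_of_gt (hsub hu))
      · exact (Complex.continuous_ofReal.continuousOn.sub continuousOn_const).pow 2
      · intro u hu
        exact pow_ne_zero 2 (keyne w₁ (mem_ball_self hε) u hu)
    exact hcont.aestronglyMeasurable hs
  · -- bound
    filter_upwards [ae_restrict_mem hs] with u hu w hw
    rw [norm_div, norm_pow]
    by_cases hcase : u ≤ T
    · rw [hbound]
      simp only [if_pos hcase]
      exact div_le_div₀ hC0 (hC u (hsub hu)) (by positivity)
        (pow_le_pow_left₀ hε.le (key w hw u hu) 2)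
    · rw [hbound]
      simp only [if_neg hcase]
      push_neg at hcase
      have hu1 : (1:ℝ) ≤ u := le_of_lt (lt_of_le_of_lt hT1 hcase)
      have hu0 : (0:ℝ) < u := by linarith
      have hmr : 2 * (m + r) ≤ u := le_of_lt (lt_of_le_of_lt (le_max_right _ _) hcase)
      have hlow : u / 2 ≤ ‖(u:ℂ) - w‖ := by
        have h1 : ‖(u:ℂ)‖ - ‖w‖ ≤ ‖(u:ℂ) - w‖ := norm_sub_norm_le _ _
        have h2 : ‖(u:ℂ)‖ = u := by
          rw [Complex.norm_real, Real.norm_eq_abs, abs_of_pos hu0]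
        have h3 := key2 w hw
        linarith
      have hsq : ε * (u / 2) ≤ ‖(u:ℂ) - w‖ ^ 2 := by
        rw [sq]
        exact mul_le_mul (key w hw u hu) hlow (by positivity) (norm_nonneg _)
      have h3 : ‖f ↑u‖ / ‖(u:ℂ) - w‖ ^ 2 ≤ C * u ^ (-δ) / (ε * (u / 2)) :=
        div_le_div₀ (by positivity) (hCδ u hu1) (by positivity) hsq
      refine h3.trans (le_of_eq ?_)
      rw [show -δ - 1 = -δ + (-1) by ring, Real.rpow_add hu0, Real.rpow_neg_one]
      field_simp
  · -- integrability of bound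
    show IntegrableOn bound s volume
    have hsplit : s = (s ∩ Iic T) ∪ (s ∩ Ioi T) := by
      rw [← inter_union_distrib_left, Iic_union_Ioi, inter_univ]
    rw [hsplit]
    apply IntegrableOn.union
    · have h1 : IntegrableOn (fun _ : ℝ => C / ε ^ 2) (s ∩ Iic T) := by
        refine integrableOn_const (ne_of_lt ?_)
        refine lt_of_le_of_lt (measure_mono ?_) (measure_Ioc_lt_top (a := 0) (b := T))
        rintro u ⟨hu1, hu2⟩
        exact ⟨hsub hu1, hu2⟩
      refine h1.congr_fun (fun u hu => ?_) (hs.inter measurableSet_Iic)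
      exact (if_pos hu.2).symm
    · have h1 : IntegrableOn (fun u : ℝ => 2 * C / ε * u ^ (-δ - 1)) (s ∩ Ioi T) := by
        have h2 : IntegrableOn (fun u : ℝ => 2 * C / ε * u ^ (-δ - 1)) (Ioi T) :=
          (integrableOn_Ioi_rpow_of_lt (show -δ - 1 < -1 by linarith) hT0).const_mul _
        exact h2.mono_set inter_subset_right
      refine h1.congr_fun (fun u hu => ?_) (hs.inter measurableSet_Ioi)
      exact (if_neg (not_le.mpr hu.2)).symm
  · -- derivative
    filter_upwards [ae_restrict_mem hs] with u hu w hw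
    have h0 : ((u:ℂ) - w) ≠ 0 := keyne w hw u hu
    have h1 : HasDerivAt (fun w : ℂ => (u:ℂ) - w) (-1) w := (hasDerivAt_id w).const_sub _
    have h2 := (h1.inv h0).const_mul (f u)
    have : f ↑u * (-(-1) / ((u:ℂ) - w) ^ 2) = f ↑u / ((u:ℂ) - w) ^ 2 := by
      field_simp
    rw [this] at h2
    refine h2.congr_of_eventuallyEq ?_
    filter_upwards with w
    rw [div_eq_mul_inv]
    rfl

lemma aux_diff_k {f : ℂ → ℂ} (hfd : DifferentiableOn ℂ f {z : ℂ | z ≠ 0})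
    {m r : ℝ} (hr : 0 < r) (hrm : r < m) :
    DifferentiableOn ℂ (fun w => ∫ u in Ioc (m - r) (m + r), dslope f (u:ℂ) w)
      (ball (m:ℂ) r) := by
  have hm0 : 0 < m := lt_trans hr hrm
  have hmnorm : ‖(m:ℂ)‖ = m := by
    rw [Complex.norm_real, Real.norm_eq_abs, abs_of_pos hm0]
  have hballm : ball (m:ℂ) m ⊆ {z : ℂ | z ≠ 0} := by
    intro z hz
    simp only [mem_setOf_eq, ne_eq]
    intro h
    rw [mem_ball, dist_eq_norm, h, zero_sub, norm_neg, hmnorm] at hz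
    exact lt_irrefl _ hz
  have huball : ∀ u : ℝ, u ∈ Ioo (m - r) (m + r) → (u:ℂ) ∈ ball (m:ℂ) r := by
    intro u hu
    rw [mem_ball, dist_eq_norm, ← Complex.ofReal_sub, Complex.norm_real,
      Real.norm_eq_abs, abs_lt]
    constructor <;> [linarith [hu.1]; linarith [hu.2]]
  have hdiffm : DifferentiableOn ℂ f (ball (m:ℂ) m) := hfd.mono hballm
  have hdslope_diff : ∀ u : ℝ, (u:ℂ) ∈ ball (m:ℂ) r →
      DifferentiableOn ℂ (dslope f (u:ℂ)) (ball (m:ℂ) m) := by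
    intro u hu
    exact (Complex.differentiableOn_dslope
      (isOpen_ball.mem_nhds (ball_subset_ball hrm.le hu))).mpr hdiffm
  set r' : ℝ := (r + m) / 2 with hr'
  set r'' : ℝ := (3 * r + m) / 4 with hr''
  set ρ : ℝ := (m - r) / 4 with hρ'
  have hρ : 0 < ρ := by rw [hρ']; linarith
  have hr'0 : 0 < r' := by rw [hr']; linarith
  have hrr' : r < r' := by rw [hr']; linarith
  have hr'm : r' < m := by rw [hr']; linarith
  have hr''r' : r'' < r' := by rw [hr'', hr']; linarith
  have hrr'' : r < r'' := by rw [hr'']; linarith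
  have hcb_sub : closedBall (m:ℂ) r' ⊆ ball (m:ℂ) m := by
    intro z hz
    rw [mem_closedBall] at hz
    rw [mem_ball]
    exact lt_of_le_of_lt hz hr'm
  have hcb_ne : closedBall (m:ℂ) r' ⊆ {z : ℂ | z ≠ 0} := fun z hz => hballm (hcb_sub hz)
  obtain ⟨M, hM⟩ := (isCompact_closedBall (m:ℂ) r').exists_bound_of_continuousOn
    (hfd.continuousOn.mono hcb_ne)
  have hM0 : 0 ≤ M := le_trans (norm_nonneg _) (hM (m:ℂ) (mem_closedBall_self hr'0.le))
  set M₂ : ℝ := 2 * M / (r' - r) with hM₂'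
  have hM₂0 : 0 ≤ M₂ := by
    rw [hM₂']
    apply div_nonneg (by positivity)
    rw [hr']; linarith
  -- sup bound for dslope on closedBall m r''
  have hsup : ∀ u : ℝ, (u:ℂ) ∈ ball (m:ℂ) r → ∀ w ∈ closedBall (m:ℂ) r'',
      ‖dslope f (u:ℂ) w‖ ≤ M₂ := by
    intro u hu w hw
    have hwc : w ∈ closure (ball (m:ℂ) r') := by
      rw [closure_ball _ (ne_of_gt hr'0)]
      exact mem_closedBall.mpr (le_trans (mem_closedBall.mp hw) hr''r'.le)
    refine Complex.norm_le_of_forall_mem_frontier_norm_le isBounded_ball ?_ ?_ hwc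
    · refine DifferentiableOn.diffContOnCl ?_
      rw [closure_ball _ (ne_of_gt hr'0)]
      exact (hdslope_diff u hu).mono hcb_sub
    · intro ζ hζ
      rw [frontier_ball _ (ne_of_gt hr'0), mem_sphere_iff_norm] at hζ
      have hune : ζ ≠ (u:ℂ) := by
        intro h
        rw [h] at hζ
        have := mem_ball_iff_norm.mp hu
        rw [hζ] at this
        linarith
      rw [dslope_of_ne f hune, slope_def_field]
      rw [norm_div]
      have h1 : ‖f ζ‖ ≤ M := hM ζ (mem_closedBall_iff_norm.mpr (le_of_eq hζ))
      have h2 : ‖f (u:ℂ)‖ ≤ M := hM _ (mem_closedBall_iff_norm.mpr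
        (le_trans (mem_ball_iff_norm.mp hu).le hrr'.le))
      have h3 : r' - r ≤ ‖ζ - (u:ℂ)‖ := by
        have h4 : ‖ζ - (m:ℂ)‖ - ‖(u:ℂ) - m‖ ≤ ‖ζ - (u:ℂ)‖ := by
          have he : ζ - (u:ℂ) = (ζ - m) - ((u:ℂ) - m) := by ring
          rw [he]
          exact norm_sub_norm_le _ _
        have h5 := mem_ball_iff_norm.mp hu
        rw [hζ] at h4
        linarith
      have h6 : ‖f ζ - f (u:ℂ)‖ ≤ 2 * M := le_trans (norm_sub_le _ _) (by linarith)
      rw [hM₂']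
      exact div_le_div₀ (by positivity) h6 (by linarith) h3
  -- derivative bound
  have hDbound : ∀ u : ℝ, (u:ℂ) ∈ ball (m:ℂ) r → ∀ w ∈ ball (m:ℂ) r,
      ‖deriv (dslope f (u:ℂ)) w‖ ≤ M₂ / ρ := by
    intro u hu w hw
    have hsub2 : closedBall w ρ ⊆ closedBall (m:ℂ) r'' := by
      intro ζ hζ
      rw [mem_closedBall] at hζ ⊢
      have : dist ζ (m:ℂ) ≤ dist ζ w + dist w (m:ℂ) := dist_triangle _ _ _
      have hw' := mem_ball.mp hw
      rw [hr'']
      have : dist ζ (m:ℂ) ≤ ρ + r := by linarith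
      rw [hρ'] at this
      linarith
    refine Complex.norm_deriv_le_of_forall_mem_sphere_norm_le hρ ?_ ?_
    · refine DifferentiableOn.diffContOnCl ?_
      rw [closure_ball _ (ne_of_gt hρ)]
      refine (hdslope_diff u hu).mono (subset_trans hsub2 ?_)
      intro ζ hζ
      rw [mem_closedBall] at hζ
      rw [mem_ball]
      calc dist ζ (m:ℂ) ≤ r'' := hζ
        _ < m := by rw [hr'']; linarith
    · intro ζ hζ
      exact hsup u hu ζ (hsub2 (sphere_subset_closedBall hζ))
  -- now the parametric integral
  intro w₁ hw₁
  have hw₁m : w₁ ∈ ball (m:ℂ) m := ball_subset_ball hrm.le hw₁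
  have hw₁0 : w₁ ≠ 0 := hballm hw₁m
  set d : ℝ := dist w₁ (m:ℂ) with hdd
  have hd : d < r := mem_ball.mp hw₁
  set ε : ℝ := (r - d) / 2 with hε'
  have hε : 0 < ε := by
    have : 0 ≤ d := dist_nonneg
    rw [hε']; linarith
  have hballsub : ball w₁ ε ⊆ ball (m:ℂ) r := by
    intro w hw
    rw [mem_ball] at hw ⊢
    have : dist w (m:ℂ) ≤ dist w w₁ + dist w₁ (m:ℂ) := dist_triangle _ _ _
    rw [hε'] at hw
    linarith
  have hIoo : ∀ᵐ u ∂volume.restrict (Ioc (m - r) (m + r)), u ∈ Ioo (m - r) (m + r) := by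
    have h1 : ∀ᵐ (u:ℝ) ∂volume, u ≠ m + r := by
      rw [ae_iff]
      refine measure_mono_null (fun u hu => ?_) (Real.volume_singleton (a := m + r))
      simp only [mem_setOf_eq, not_not] at hu
      exact hu
    filter_upwards [ae_restrict_mem measurableSet_Ioc, ae_restrict_of_ae h1] with u h2 h3
    exact ⟨h2.1, lt_of_le_of_ne h2.2 h3⟩
  have hne_ae : ∀ w : ℂ, ∀ᵐ (u : ℝ) ∂volume.restrict (Ioc (m - r) (m + r)), (u:ℂ) ≠ w := by
    intro w
    refine ae_restrict_of_ae ?_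
    rw [ae_iff]
    have hsub : {u : ℝ | ¬ (u:ℂ) ≠ w} ⊆ ({w.re} : Set ℝ) := by
      intro u hu
      simp only [mem_setOf_eq, not_not] at hu
      rw [mem_singleton_iff, ← hu]
      simp
    exact measure_mono_null hsub (Real.volume_singleton)
  have hfmeas : AEStronglyMeasurable (fun u : ℝ => f (u:ℝ))
      (volume.restrict (Ioc (m - r) (m + r))) := by
    refine ContinuousOn.aestronglyMeasurable ?_ measurableSet_Ioc
    refine hfd.continuousOn.comp Complex.continuous_ofReal.continuousOn ?_
    intro u hu
    simp only [mem_setOf_eq, ne_eq, Complex.ofReal_eq_zero]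
    intro h
    rw [h] at hu
    have := hu.1
    linarith
  have hmeas : ∀ w : ℂ, AEStronglyMeasurable (fun u : ℝ => dslope f (u:ℂ) w)
      (volume.restrict (Ioc (m - r) (m + r))) := by
    intro w
    have hg : AEStronglyMeasurable (fun u : ℝ => (f w - f (u:ℝ)) * (w - (u:ℂ))⁻¹)
        (volume.restrict (Ioc (m - r) (m + r))) := by
      refine AEStronglyMeasurable.mul ?_ ?_
      · exact aestronglyMeasurable_const.sub hfmeas
      · exact ((measurable_const.sub Complex.measurable_ofReal).inv).aestronglyMeasurable
    refine hg.congr ?_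
    filter_upwards [hne_ae w] with u hu
    rw [dslope_of_ne f (Ne.symm hu), slope_def_field, div_eq_mul_inv]
  set bound : ℝ → ℝ := fun _ => M₂ / ρ with hbound
  have main := hasDerivAt_integral_of_dominated_loc_of_deriv_le
    (μ := volume.restrict (Ioc (m - r) (m + r)))
    (F := fun (w : ℂ) (u : ℝ) => dslope f (u:ℂ) w)
    (F' := fun (w : ℂ) (u : ℝ) => deriv (dslope f (u:ℂ)) w)
    (x₀ := w₁) (bound := bound) (ball_mem_nhds w₁ hε) ?_ ?_ ?_ ?_ ?_ ?_
  · exact main.2.differentiableAt.differentiableWithinAt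
  · filter_upwards with w using hmeas w
  · -- integrability at w₁
    refine Integrable.mono' (g := fun _ : ℝ => M₂) ?_ (hmeas w₁) ?_
    · refine integrableOn_const (ne_of_lt ?_)
      exact measure_Ioc_lt_top
    · filter_upwards [hIoo] with u hu
      exact hsup u (huball u hu) w₁ (closedBall_subset_closedBall hrr''.le
        (ball_subset_closedBall hw₁))
  · -- measurability of F' w₁
    have hE : AEStronglyMeasurable (fun u : ℝ =>
        deriv f w₁ * (w₁ - (u:ℂ))⁻¹ + (f w₁ - f (u:ℝ)) * (-1 / (w₁ - (u:ℂ)) ^ 2))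
        (volume.restrict (Ioc (m - r) (m + r))) := by
      refine AEStronglyMeasurable.add ?_ ?_
      · exact (((measurable_const.sub Complex.measurable_ofReal).inv).const_mul
          _).aestronglyMeasurable
      · refine AEStronglyMeasurable.mul (aestronglyMeasurable_const.sub hfmeas) ?_
        exact (measurable_const.div
          ((measurable_const.sub Complex.measurable_ofReal).pow_const 2)).aestronglyMeasurable
    refine hE.congr ?_
    filter_upwards [hne_ae w₁] with u hu
    have hne : w₁ ≠ (u:ℂ) := Ne.symm hu
    have hA : HasDerivAt (fun w : ℂ => f w - f (u:ℝ)) (deriv f w₁) w₁ := by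
      have := (hfd.differentiableAt (isOpen_ne.mem_nhds hw₁0)).hasDerivAt
      exact this.sub_const _
    have hB : HasDerivAt (fun w : ℂ => (w - (u:ℂ))⁻¹) (-1 / (w₁ - (u:ℂ)) ^ 2) w₁ := by
      have h1 := ((hasDerivAt_id w₁).sub_const (u:ℂ)).inv (sub_ne_zero.mpr hne)
      simpa [Pi.inv_def] using h1
    have h1 := hA.mul hB
    have h2 : dslope f (u:ℂ) =ᶠ[𝓝 w₁] fun w : ℂ => (f w - f (u:ℝ)) * (w - (u:ℂ))⁻¹ := by
      filter_upwards [isOpen_ne.mem_nhds hne] with w hw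
      rw [dslope_of_ne f hw, slope_def_field, div_eq_mul_inv]
    have h3 := h1.congr_of_eventuallyEq h2
    rw [h3.deriv]
  · -- bound on derivative
    filter_upwards [hIoo] with u hu w hw
    exact hDbound u (huball u hu) w (hballsub hw)
  · -- integrability of bound
    refine integrableOn_const (ne_of_lt ?_)
    exact measure_Ioc_lt_top
  · -- differentiability
    filter_upwards [hIoo] with u hu w hw
    have : DifferentiableAt ℂ (dslope f (u:ℂ)) w := by
      refine (hdslope_diff u (huball u hu)).differentiableAt ?_
      exact isOpen_ball.mem_nhds (ball_subset_ball hrm.le (hballsub hw))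
    exact this.hasDerivAt

lemma aux_J {w : ℂ} (hw : w.im ≠ 0) {a b : ℝ} (hab : a ≤ b) :
    ∫ u in Ioc a b, ((u:ℂ) - w)⁻¹ =
      Complex.log ((b:ℂ) - w) - Complex.log ((a:ℂ) - w) := by
  have hne : ∀ x : ℝ, ((x:ℂ) - w) ≠ 0 := by
    intro x h
    apply hw
    have : ((x:ℂ) - w).im = 0 := by rw [h]; rfl
    simpa [Complex.sub_im, Complex.ofReal_im] using this.symm
  rw [← intervalIntegral.integral_of_le hab]
  apply intervalIntegral.integral_eq_sub_of_hasDerivAt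
  · intro x _
    have hmem : ((x:ℂ) - w) ∈ Complex.slitPlane := by
      rw [Complex.mem_slitPlane_iff]
      right
      simp only [Complex.sub_im, Complex.ofReal_im, zero_sub]
      exact neg_ne_zero.mpr hw
    have h1 : HasDerivAt (fun z : ℂ => Complex.log (z - w)) (((x:ℂ) - w)⁻¹) (x:ℂ) := by
      have h2 := (Complex.hasDerivAt_log hmem).comp (x:ℂ)
        ((hasDerivAt_id (x:ℂ)).sub_const w)
      simpa [Function.comp_def] using h2
    exact h1.comp_ofReal
  · apply ContinuousOn.intervalIntegrable
    exact (Complex.continuous_ofReal.continuousOn.sub continuousOn_const).inv₀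
      (fun x _ => hne x)

lemma aux_logflip_neg {ζ : ℂ} (h : ζ.im < 0) :
    Complex.log (-ζ) = Complex.log ζ + Real.pi * I := by
  apply Complex.ext
  · simp [Complex.log_re, Complex.add_re, Complex.log_re, Complex.mul_re]
  · rw [Complex.log_im, Complex.arg_neg_eq_arg_add_pi_of_im_neg h]
    simp [Complex.log_im]

lemma aux_logflip_pos {ζ : ℂ} (h : 0 < ζ.im) :
    Complex.log (-ζ) = Complex.log ζ - Real.pi * I := by
  apply Complex.ext
  · simp [Complex.log_re, Complex.sub_re, Complex.mul_re]
  · rw [Complex.log_im, Complex.arg_neg_eq_arg_sub_pi_of_im_pos h]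
    simp [Complex.log_im]

lemma aux_mid {f : ℂ → ℂ} (hf : ContinuousOn f {z : ℂ | z ≠ 0})
    {w : ℂ} (hw : w.im ≠ 0) {a b : ℝ} (h0a : 0 < a) (hab : a ≤ b)
    (hker : IntegrableOn (fun u : ℝ => f u / (u - w)) (Ioc a b)) :
    ∫ u in Ioc a b, f u / (u - w) =
      (∫ u in Ioc a b, dslope f (u:ℂ) w) + f w * ∫ u in Ioc a b, ((u:ℂ) - w)⁻¹ := by
  have hne : ∀ x : ℝ, ((x:ℂ) - w) ≠ 0 := by
    intro x h
    apply hw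
    have : ((x:ℂ) - w).im = 0 := by rw [h]; rfl
    simpa [Complex.sub_im, Complex.ofReal_im] using this.symm
  have hne' : ∀ x : ℝ, w ≠ (x:ℂ) := fun x h => hne x (by rw [h]; ring)
  have hptw : ∀ u ∈ Ioc a b,
      f u / (u - w) = dslope f (u:ℂ) w + f w * ((u:ℂ) - w)⁻¹ := by
    intro u _
    rw [dslope_of_ne f (hne' u), slope_def_field]
    have h1 : ((u:ℂ) - w) ≠ 0 := hne u
    have h2 : (w - (u:ℂ)) ≠ 0 := fun h => h1 (by rw [← neg_sub] at h; simpa using congrArg Neg.neg h)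
    field_simp
    ring
  have hinv_int : IntegrableOn (fun u : ℝ => ((u:ℂ) - w)⁻¹) (Ioc a b) := by
    refine (ContinuousOn.integrableOn_Icc ?_).mono_set Ioc_subset_Icc_self
    exact (Complex.continuous_ofReal.continuousOn.sub continuousOn_const).inv₀
      (fun x _ => hne x)
  have hdsl_int : IntegrableOn (fun u : ℝ => dslope f (u:ℂ) w) (Ioc a b) := by
    have h1 : IntegrableOn
        (fun u : ℝ => f u / (u - w) - f w * ((u:ℂ) - w)⁻¹) (Ioc a b) :=
      hker.sub (hinv_int.const_mul _)
    refine h1.congr_fun (fun u hu => ?_) measurableSet_Ioc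
    beta_reduce; rw [hptw u hu]; ring
  rw [setIntegral_congr_fun measurableSet_Ioc hptw]
  rw [integral_add hdsl_int (hinv_int.const_mul _)]
  rw [MeasureTheory.integral_const_mul]

lemma aux_fullsplit {g : ℝ → ℂ} (hg : IntegrableOn g (Ioi (0:ℝ)))
    {a b : ℝ} (h0a : 0 < a) (hab : a ≤ b) :
    ∫ u in Ioi (0:ℝ), g u = (∫ u in Ioc 0 a, g u) + (∫ u in Ioc a b, g u)
      + ∫ u in Ioi b, g u := by
  have h0b : (0:ℝ) ≤ b := le_trans h0a.le hab
  have e1 : Ioc (0:ℝ) a ∪ Ioc a b = Ioc 0 b := Ioc_union_Ioc_eq_Ioc h0a.le hab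
  have e2 : Ioc (0:ℝ) b ∪ Ioi b = Ioi 0 := Ioc_union_Ioi_eq_Ioi h0b
  have hsub1 : Ioc (0:ℝ) a ⊆ Ioi 0 := fun u hu => hu.1
  have hsub2 : Ioc a b ⊆ Ioi (0:ℝ) := fun u hu => lt_trans h0a hu.1
  have hsub3 : Ioi b ⊆ Ioi (0:ℝ) := fun u hu => lt_of_le_of_lt h0b hu
  have hsub4 : Ioc (0:ℝ) b ⊆ Ioi 0 := fun u hu => hu.1
  rw [← e2, setIntegral_union Ioc_disjoint_Ioi_same measurableSet_Ioi
    (hg.mono_set hsub4) (hg.mono_set hsub3), ← e1,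
    setIntegral_union (Ioc_disjoint_Ioc_of_le le_rfl) measurableSet_Ioc
    (hg.mono_set hsub1) (hg.mono_set hsub2)]

/-- Let `c ≠ 0`, `δ > 0`, and let `f` be holomorphic on `ℂ \ {0}`, bounded near `0`
on the positive real axis and `O(u^{-δ})` at infinity there.  If `G` is holomorphic
on `{z | Re (cz) > 0}` and agrees with `F₁(z) = ∫_0^∞ f(u)/(u - cz) du` for `cz` in
the fourth quadrant (the analytic continuation of `F₁`), then for `cz` in the first
quadrant `G(z) = -2πi f(cz) + ∫_0^∞ f(u)/(u - cz) du`. -/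
theorem analytic_continuation_of_cauchy_type_integral (c : ℂ) (hc : c ≠ 0) (δ : ℝ)
    (hδ : 0 < δ) (f : ℂ → ℂ) (hf : DifferentiableOn ℂ f {z : ℂ | z ≠ 0})
    (hf0 : ∃ C : ℝ, ∀ u : ℝ, 0 < u → u < 1 → ‖f u‖ ≤ C)
    (hfinf : ∃ C : ℝ, ∀ u : ℝ, 1 ≤ u → ‖f u‖ ≤ C * u ^ (-δ))
    (G : ℂ → ℂ) (hG : DifferentiableOn ℂ G {z : ℂ | 0 < (c * z).re})
    (hGF : ∀ z : ℂ, 0 < (c * z).re → (c * z).im < 0 →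
      G z = ∫ u in Ioi (0 : ℝ), f u / (u - c * z)) :
    ∀ z : ℂ, 0 < (c * z).re → 0 < (c * z).im →
      G z = -(2 * Real.pi * Complex.I) * f (c * z) +
        ∫ u in Ioi (0 : ℝ), f u / (u - c * z) := by
  intro z₀ hre him
  obtain ⟨C₀, hC₀⟩ := hf0
  obtain ⟨C₁, hC₁⟩ := hfinf
  have hC₁0 : 0 ≤ C₁ := by
    have h := hC₁ 1 le_rfl
    rw [Real.one_rpow, mul_one] at h
    linarith [norm_nonneg (f ((1:ℝ):ℂ))]
  set C := max C₀ C₁ with hCdef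
  have hC : ∀ u : ℝ, 0 < u → ‖f u‖ ≤ C := by
    intro u hu
    rcases lt_or_ge u 1 with h | h
    · exact le_trans (hC₀ u hu h) (le_max_left _ _)
    · refine le_trans (hC₁ u h) (le_trans ?_ (le_max_right _ _))
      calc C₁ * u ^ (-δ) ≤ C₁ * 1 := by
            refine mul_le_mul_of_nonneg_left ?_ hC₁0
            exact Real.rpow_le_one_of_one_le_of_nonpos h (by linarith)
        _ = C₁ := mul_one _
  have hCδ : ∀ u : ℝ, 1 ≤ u → ‖f u‖ ≤ C * u ^ (-δ) := by
    intro u hu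
    refine le_trans (hC₁ u hu) (mul_le_mul_of_nonneg_right (le_max_right _ _) ?_)
    positivity
  have hcont : ContinuousOn f {z : ℂ | z ≠ 0} := hf.continuousOn
  set w₀ := c * z₀ with hw₀def
  set m : ℝ := (w₀.re ^ 2 + w₀.im ^ 2) / (2 * w₀.re) + 1 with hm'
  have hm0 : 0 < m := by
    have h1 : 0 ≤ (w₀.re ^ 2 + w₀.im ^ 2) / (2 * w₀.re) := by positivity
    rw [hm']; linarith
  have hd : dist w₀ (m:ℂ) < m := by
    rw [dist_eq_norm]
    have hsq : ‖w₀ - (m:ℂ)‖ ^ 2 < m ^ 2 := by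
      rw [Complex.sq_norm, Complex.normSq_apply]
      simp only [Complex.sub_re, Complex.sub_im, Complex.ofReal_re, Complex.ofReal_im,
        sub_zero]
      have hmre : m * (2 * w₀.re) = w₀.re ^ 2 + w₀.im ^ 2 + 2 * w₀.re := by
        rw [hm']; field_simp
      nlinarith [hre]
    nlinarith [norm_nonneg (w₀ - (m:ℂ)), hm0]
  set d : ℝ := dist w₀ (m:ℂ) with hd'
  have hd0 : 0 ≤ d := dist_nonneg
  set r : ℝ := (d + m) / 2 with hr'
  clear_value m d r
  have hr0 : 0 < r := by rw [hr']; linarith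
  have hdr : d < r := by rw [hr']; linarith
  have hrm : r < m := by rw [hr']; linarith
  have ha : 0 < m - r := by linarith
  have hab : m - r ≤ m + r := by linarith
  -- membership facts for the ball
  have hre_ball : ∀ w : ℂ, w ∈ ball (m:ℂ) r → m - r < w.re := by
    intro w hw
    have h1 : |(w - (m:ℂ)).re| ≤ ‖w - (m:ℂ)‖ := Complex.abs_re_le_norm _
    have h2 : ‖w - (m:ℂ)‖ < r := mem_ball_iff_norm.mp hw
    have h3 : (w - (m:ℂ)).re = w.re - m := by
      simp [Complex.sub_re, Complex.ofReal_re]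
    rw [h3] at h1
    have := abs_lt.mp (lt_of_le_of_lt h1 h2)
    linarith [this.1]
  have hball_ne : ball (m:ℂ) r ⊆ {z : ℂ | z ≠ 0} := by
    intro w hw h0
    have := hre_ball w hw
    rw [h0] at this
    simp at this
    linarith
  have hre_ball' : ∀ w : ℂ, w ∈ ball (m:ℂ) r → ‖w‖ < m + r := by
    intro w hw
    have h1 : ‖w‖ ≤ ‖w - (m:ℂ)‖ + ‖(m:ℂ)‖ := by
      have : w = (w - (m:ℂ)) + m := by ring
      nth_rewrite 1 [this]
      exact norm_add_le _ _
    have h2 : ‖w - (m:ℂ)‖ < r := mem_ball_iff_norm.mp hw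
    have h3 : ‖(m:ℂ)‖ = m := by
      rw [Complex.norm_real, Real.norm_eq_abs, abs_of_pos hm0]
    linarith
  have hw₀ball : w₀ ∈ ball (m:ℂ) r := mem_ball.mpr (by rw [← hd']; exact hdr)
  -- kernel integrability for any w in the ball off the real axis
  have hker : ∀ w : ℂ, w.im ≠ 0 →
      IntegrableOn (fun u : ℝ => f u / (u - w)) (Ioi 0) := by
    intro w hwim
    refine aux_integrableOn_kernel hcont hδ hC hCδ w (ε := |w.im|)
      (abs_pos.mpr hwim) measurableSet_Ioi (fun u hu => hu) ?_
    intro u _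
    have h1 : |((u:ℂ) - w).im| ≤ ‖(u:ℂ) - w‖ := Complex.abs_im_le_norm _
    have h2 : ((u:ℂ) - w).im = -w.im := by
      simp [Complex.sub_im, Complex.ofReal_im]
    rw [h2, abs_neg] at h1
    exact h1
  -- the decomposition identity
  have hdecomp : ∀ w : ℂ, w ∈ ball (m:ℂ) r → w.im ≠ 0 →
      (∫ u in Ioi (0:ℝ), f u / (u - w)) =
        ((∫ u in Ioc 0 (m - r), f u / (u - w)) + ∫ u in Ioi (m + r), f u / (u - w))
        + (∫ u in Ioc (m - r) (m + r), dslope f (u:ℂ) w)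
        + f w * (Complex.log (((m + r : ℝ):ℂ) - w) - Complex.log (((m - r : ℝ):ℂ) - w)) := by
    intro w _ hwim
    rw [aux_fullsplit (hker w hwim) ha hab]
    rw [aux_mid hcont hwim ha hab ((hker w hwim).mono_set
      (fun u hu => lt_trans ha hu.1))]
    rw [aux_J hwim hab]
    ring
  -- define H and prove analyticity on Z
  set Z : Set ℂ := (fun z => c * z) ⁻¹' (ball (m:ℂ) r) with hZdef
  have hZopen : IsOpen Z := IsOpen.preimage (continuous_const.mul continuous_id) isOpen_ball
  have hZsub : Z ⊆ {z : ℂ | 0 < (c * z).re} := by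
    intro z hz
    have := hre_ball _ hz
    simp only [mem_setOf_eq]
    linarith
  set H : ℂ → ℂ := fun z =>
    (((∫ u in Ioc 0 (m - r), f u / (u - c * z)) + ∫ u in Ioi (m + r), f u / (u - c * z))
      + (∫ u in Ioc (m - r) (m + r), dslope f (u:ℂ) (c * z)))
      + f (c * z) * (Complex.log (((m + r : ℝ):ℂ) - c * z)
          - Complex.log (c * z - ((m - r : ℝ):ℂ)) - Real.pi * I) with hHdef
  have hmul : Differentiable ℂ (fun z : ℂ => c * z) := (differentiable_id.const_mul c)
  have hmaps : MapsTo (fun z : ℂ => c * z) Z (ball (m:ℂ) r) := fun z hz => hz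
  have hHd : DifferentiableOn ℂ H Z := by
    have hR1 : DifferentiableOn ℂ (fun w => ∫ u in Ioc (0:ℝ) (m - r), f u / (u - w))
        (ball (m:ℂ) r) := by
      refine aux_diff_R hf hδ hC hCδ hr0 hrm measurableSet_Ioc (fun u hu => hu.1) ?_
      intro u hu
      have : ‖(u:ℂ) - (m:ℝ)‖ = |u - m| := by
        rw [← Complex.ofReal_sub, Complex.norm_real, Real.norm_eq_abs]
      rw [this, abs_sub_comm, abs_of_pos (by linarith [hu.2] : 0 < m - u)]
      linarith [hu.2]
    have hR2 : DifferentiableOn ℂ (fun w => ∫ u in Ioi (m + r), f u / (u - w))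
        (ball (m:ℂ) r) := by
      refine aux_diff_R hf hδ hC hCδ hr0 hrm measurableSet_Ioi
        (fun u hu => lt_trans (by linarith : (0:ℝ) < m + r) hu) ?_
      intro u hu
      have : ‖(u:ℂ) - (m:ℝ)‖ = |u - m| := by
        rw [← Complex.ofReal_sub, Complex.norm_real, Real.norm_eq_abs]
      rw [this, abs_of_pos (by simp only [mem_Ioi] at hu; linarith : 0 < u - m)]
      simp only [mem_Ioi] at hu
      linarith
    have hkd : DifferentiableOn ℂ (fun w => ∫ u in Ioc (m - r) (m + r), dslope f (u:ℂ) w)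
        (ball (m:ℂ) r) := aux_diff_k hf hr0 hrm
    have hfd' : DifferentiableOn ℂ f (ball (m:ℂ) r) := hf.mono hball_ne
    have hL1 : DifferentiableOn ℂ (fun w : ℂ => Complex.log (((m + r : ℝ):ℂ) - w))
        (ball (m:ℂ) r) := by
      intro w hw
      refine DifferentiableAt.differentiableWithinAt ?_
      have hmem : (((m + r : ℝ):ℂ) - w) ∈ Complex.slitPlane := by
        rw [Complex.mem_slitPlane_iff]
        left
        have h1 : w.re ≤ |w.re| := le_abs_self _
        have h2 : |w.re| ≤ ‖w‖ := Complex.abs_re_le_norm _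
        have h3 := hre_ball' w hw
        simp only [Complex.sub_re, Complex.ofReal_re]
        linarith
      exact (Complex.differentiableAt_log hmem).comp w
        ((differentiable_const _).differentiableAt.sub differentiable_id.differentiableAt)
    have hL2 : DifferentiableOn ℂ (fun w : ℂ => Complex.log (w - ((m - r : ℝ):ℂ)))
        (ball (m:ℂ) r) := by
      intro w hw
      refine DifferentiableAt.differentiableWithinAt ?_
      have hmem : (w - ((m - r : ℝ):ℂ)) ∈ Complex.slitPlane := by
        rw [Complex.mem_slitPlane_iff]
        left
        have := hre_ball w hw
        simp only [Complex.sub_re, Complex.ofReal_re]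
        linarith
      exact (Complex.differentiableAt_log hmem).comp w
        (differentiable_id.differentiableAt.sub (differentiable_const _).differentiableAt)
    have hLd : DifferentiableOn ℂ (fun w : ℂ =>
        Complex.log (((m + r : ℝ):ℂ) - w) - Complex.log (w - ((m - r : ℝ):ℂ)) - Real.pi * I)
        (ball (m:ℂ) r) := (hL1.sub hL2).sub (differentiableOn_const _)
    exact ((((hR1.add hR2).comp hmul.differentiableOn hmaps).add
      (hkd.comp hmul.differentiableOn hmaps)).add
      (((hfd'.comp hmul.differentiableOn hmaps)).mul (hLd.comp hmul.differentiableOn hmaps)))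
  have hGd : DifferentiableOn ℂ G Z := hG.mono hZsub
  -- G = H on the lower part
  have hGH : ∀ z : ℂ, z ∈ Z → (c * z).im < 0 → G z = H z := by
    intro z hz hzim
    rw [hGF z (hZsub hz) hzim, hdecomp (c * z) hz (ne_of_lt hzim), hHdef]
    have hflip : Complex.log (((m - r : ℝ):ℂ) - c * z)
        = Complex.log (c * z - ((m - r : ℝ):ℂ)) + Real.pi * I := by
      have himz : (c * z - ((m - r : ℝ):ℂ)).im < 0 := by
        simp only [Complex.sub_im, Complex.ofReal_im]
        linarith
      have h := aux_logflip_neg himz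
      rw [neg_sub] at h
      exact h
    rw [hflip]
    ring
  -- identity theorem
  have hZconv : Convex ℝ Z := by
    refine (convex_ball _ _).is_linear_preimage ?_
    exact ⟨fun x y => mul_add c x y, fun t x => mul_smul_comm t c x⟩
  set zm : ℂ := c⁻¹ * ((m:ℂ) - ((r/2 : ℝ):ℂ) * I) with hzm'
  have hczm : c * zm = (m:ℂ) - ((r/2 : ℝ):ℂ) * I := by
    rw [hzm', ← mul_assoc, mul_inv_cancel₀ hc, one_mul]
  have hzmZ : zm ∈ Z := by
    simp only [hZdef, mem_preimage, hczm, mem_ball, dist_eq_norm]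
    have : (m:ℂ) - ((r/2 : ℝ):ℂ) * I - m = -(((r/2 : ℝ):ℂ) * I) := by ring
    rw [this, norm_neg]
    rw [norm_mul, Complex.norm_I, mul_one, Complex.norm_real, Real.norm_eq_abs,
      abs_of_pos (by linarith : (0:ℝ) < r/2)]
    linarith
  have hzmim : (c * zm).im < 0 := by
    rw [hczm]
    simp [Complex.sub_im, Complex.ofReal_im, Complex.mul_im, Complex.I_im, Complex.I_re,
      Complex.ofReal_re]
    linarith
  have heq : EqOn G H Z := by
    refine (hGd.analyticOnNhd hZopen).eqOn_of_preconnected_of_eventuallyEq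
      (hHd.analyticOnNhd hZopen) hZconv.isPreconnected hzmZ ?_
    have hO : IsOpen (Z ∩ {z : ℂ | (c * z).im < 0}) := by
      refine hZopen.inter (isOpen_lt ?_ continuous_const)
      exact Complex.continuous_im.comp (continuous_const.mul continuous_id)
    filter_upwards [hO.mem_nhds ⟨hzmZ, hzmim⟩] with z hz
    exact hGH z hz.1 hz.2
  -- conclude
  have hz₀Z : z₀ ∈ Z := by
    simp only [hZdef, mem_preimage]
    exact hw₀ball
  have hG0 : G z₀ = H z₀ := heq hz₀Z
  rw [hG0, hHdef, hdecomp w₀ hw₀ball (ne_of_gt him)]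
  have hflip : Complex.log (((m - r : ℝ):ℂ) - w₀)
      = Complex.log (w₀ - ((m - r : ℝ):ℂ)) - Real.pi * I := by
    have himz : 0 < (w₀ - ((m - r : ℝ):ℂ)).im := by
      simp only [Complex.sub_im, Complex.ofReal_im]
      simpa using him
    have h := aux_logflip_pos himz
    rw [neg_sub] at h
    exact h
  simp only [← hw₀def]
  rw [hflip]
  ring
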